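/- Every binary probability vector θ = (φ, 1-φ) with 0 < φ < 1/2 satisfies the skewentropy condition: V(θ)² + 2·H(θ)·V(θ) - H(θ)·S(θ) > 0, where H(θ) = φ·log(1/φ) + (1-φ)·log(1/(1-φ)), V(θ) = φ(1-φ)·(log((1-φ)/φ))², and S(θ) = φ(1-φ)(1-2φ)·(log((1-φ)/φ))³. -/

import Mathlib

theorem stmt_8 (φ : ℝ) (hφ0 : 0 < φ) (hφ1 : φ < 1/2)
    (H V S : ℝ)
    (hH : H = φ * Real.log (1 / φ) + (1 - φ) * Real.log (1 / (1 - φ)))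
    (hV : V = φ * (1 - φ) * (Real.log ((1 - φ) / φ)) ^ 2)
    (hS : S = φ * (1 - φ) * (1 - 2*φ) * (Real.log ((1 - φ) / φ)) ^ 3) :
    V ^ 2 + 2 * H * V - H * S > 0 := by
  have hq : (0:ℝ) < 1 - φ := by linarith
  have hq1 : 1 - φ < 1 := by linarith
  set L := Real.log ((1 - φ) / φ) with hLdef
  set c := -Real.log (1 - φ) with hcdef
  have hL : 0 < L := Real.log_pos (by rw [lt_div_iff₀ hφ0]; linarith)
  have hsplit : L = Real.log (1 - φ) - Real.log φ :=
    Real.log_div (ne_of_gt hq) (ne_of_gt hφ0)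
  have hc : 0 < c := by
    have := Real.log_neg hq hq1
    simp only [hcdef]; linarith
  have hcq : c ≤ φ / (1 - φ) := by
    have h := Real.log_le_sub_one_of_pos (show (0:ℝ) < (1 - φ)⁻¹ by positivity)
    rw [Real.log_inv] at h
    have h2 : (1 - φ)⁻¹ - 1 = φ / (1 - φ) := by field_simp; ring
    simp only [hcdef]; linarith
  have hHe : H = φ * L + c := by
    rw [hH, one_div, one_div, Real.log_inv, Real.log_inv, hcdef, hsplit]; ring
  have key : c * (1 - 2 * φ) ≤ φ := by
    have h1 : c * (1 - 2 * φ) ≤ (φ / (1 - φ)) * (1 - φ) :=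
      mul_le_mul hcq (by linarith) (by linarith) (by positivity)
    rw [div_mul_cancel₀ _ (ne_of_gt hq)] at h1
    exact h1
  have keyL : c * (1 - 2 * φ) * L ≤ φ * L := mul_le_mul_of_nonneg_right key hL.le
  have hinner : 0 < φ ^ 2 * L ^ 2 + 2 * φ * L + 2 * c - c * (1 - 2 * φ) * L := by
    have h1 : 0 < φ ^ 2 * L ^ 2 := by positivity
    have h2 : 0 < φ * L := by positivity
    linarith
  have main : V ^ 2 + 2 * H * V - H * S
      = φ * (1 - φ) * L ^ 2 * (φ ^ 2 * L ^ 2 + 2 * φ * L + 2 * c - c * (1 - 2 * φ) * L) := by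
    rw [hV, hS, hHe]; ring
  rw [main]
  have hfac : 0 < φ * (1 - φ) * L ^ 2 := by positivity
  exact mul_pos hfac hinner
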